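/- Let H be a real Hilbert space and (T_n)_{n≥0} a sequence of nonexpansive operators T_n : H → H with S := ∩_{n≥0} Fix T_n ≠ ∅. Let (x_n)_{n≥0} be generated by x_{n+1} = β_n x_n + λ_n (T_n(β_n x_n) − β_n x_n) for all n ≥ 0 from a starting point x_0 ∈ H, where (i) 0 < β_n ≤ 1 for all n ≥ 0, β_n → 1, Σ_{n≥0}(1 − β_n) = +∞, and Σ_{n≥1} |β_n − β_{n−1}| < +∞; (ii) 0 < λ_n ≤ 1 for all n ≥ 0, liminf_{n→+∞} λ_n > 0, and Σ_{n≥1} |λ_n − λ_{n−1}| < +∞; (iii) Σ_{n≥1} ‖T_n(β_{n−1} x_{n−1}) − T_{n−1}(β_{n−1} x_{n−1})‖ < +∞. Suppose in addition that the family satisfies the asymptotic condition: for any subsequence (x_{n_k})_{k≥0} of (x_n)_{n≥0} converging weakly to some x ∈ H (i.e., ⟨x_{n_k}, z⟩ → ⟨x, z⟩ for all z ∈ H) with x_{n_k} − T_{n_k} x_{n_k} → 0 strongly, one has x ∈ S. If x̄ ∈ S satisfies ‖x̄‖ ≤ ‖y‖ for all y ∈ S, then (x_n)_{n≥0} converges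 strongly to x̄. -/

import Mathlib

open scoped RealInnerProductSpace

open Filter Topology TopologicalSpace

lemma xu_lemma (s γ δ c : ℕ → ℝ) (hs0 : ∀ n, 0 ≤ s n)
    (hγ0 : ∀ n, 0 ≤ γ n) (hγ1 : ∀ n, γ n ≤ 1) (hγdiv : ¬ Summable γ)
    (hδ : ∀ ε : ℝ, 0 < ε → ∀ᶠ n in atTop, δ n ≤ ε)
    (hc : Summable c) (hc0 : ∀ n, 0 ≤ c n)
    (hrec : ∀ n, s (n + 1) ≤ (1 - γ n) * s n + γ n * δ n + c n) :
    Tendsto s atTop (nhds 0) := by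
  rw [Metric.tendsto_atTop]
  intro ε hε
  have hε4 : 0 < ε / 4 := by linarith
  -- choose N with δ n ≤ ε/4 for n ≥ N and tail sum of c ≤ ε/4
  obtain ⟨N₁, hN₁⟩ := (hδ (ε / 4) hε4).exists_forall_of_atTop
  have htail : Tendsto (fun i => ∑' k, c (k + i)) atTop (𝓝 0) := tendsto_sum_nat_add c
  obtain ⟨N₂, hN₂⟩ := (htail.eventually (eventually_le_nhds hε4)).exists_forall_of_atTop
  set N := max N₁ N₂ with hN
  have hcs : ∀ m : ℕ, Summable (fun k => c (k + m)) := fun m => (summable_nat_add_iff m).2 hc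
  -- key induction
  have key : ∀ k : ℕ, s (N + k) ≤ (∏ j ∈ Finset.range k, (1 - γ (N + j))) * s N
      + ε / 4 + ∑ j ∈ Finset.range k, c (N + j) := by
    intro k
    induction k with
    | zero => simp [hε4.le]
    | succ k ih =>
      have h1 : 0 ≤ 1 - γ (N + k) := by linarith [hγ1 (N + k)]
      have h2 : s (N + (k+1)) ≤ (1 - γ (N + k)) * s (N + k) + γ (N + k) * (ε / 4) + c (N + k) := by
        have := hrec (N + k)
        have hδk : δ (N + k) ≤ ε / 4 := hN₁ (N + k) (le_trans (le_max_left _ _) (Nat.le_add_right _ _))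
        have : γ (N + k) * δ (N + k) ≤ γ (N + k) * (ε / 4) :=
          mul_le_mul_of_nonneg_left hδk (hγ0 _)
        have h := hrec (N + k)
        calc s (N + (k+1)) = s ((N + k) + 1) := by ring_nf
          _ ≤ (1 - γ (N+k)) * s (N+k) + γ (N+k) * δ (N+k) + c (N+k) := hrec (N+k)
          _ ≤ (1 - γ (N+k)) * s (N+k) + γ (N+k) * (ε / 4) + c (N+k) := by linarith
      have h3 : (1 - γ (N + k)) * s (N + k) ≤ (1 - γ (N + k)) *
          ((∏ j ∈ Finset.range k, (1 - γ (N + j))) * s N + ε / 4 + ∑ j ∈ Finset.range k, c (N + j)) :=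
        mul_le_mul_of_nonneg_left ih h1
      have hP : 0 ≤ ∏ j ∈ Finset.range k, (1 - γ (N + j)) :=
        Finset.prod_nonneg (fun j _ => by linarith [hγ1 (N + j)])
      have hC : 0 ≤ ∑ j ∈ Finset.range k, c (N + j) :=
        Finset.sum_nonneg (fun j _ => hc0 _)
      have hγk := hγ0 (N + k)
      have hγk1 := hγ1 (N + k)
      rw [Finset.prod_range_succ, Finset.sum_range_succ]
      have hsN := hs0 N
      nlinarith [mul_nonneg hP (hs0 N)]
  -- tail sum bound
  have hsumtail : ∀ k, ∑ j ∈ Finset.range k, c (N + j) ≤ ε / 4 := by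
    intro k
    have h1 : ∑ j ∈ Finset.range k, c (N + j) ≤ ∑' j, c (N + j) := by
      have := (hcs N).sum_le_tsum (Finset.range k) (fun j _ => hc0 _)
      simpa [Nat.add_comm] using this
    have h2 : ∑' j, c (N + j) ≤ ε / 4 := by
      have := hN₂ N (le_max_right _ _)
      simpa [Nat.add_comm] using this
    linarith
  -- product tends to zero
  have hdivN : Tendsto (fun k => ∑ j ∈ Finset.range k, γ (N + j)) atTop atTop := by
    have : ¬ Summable (fun j => γ (N + j)) := by
      intro h
      exact hγdiv ((summable_nat_add_iff N).1 (by simpa [Nat.add_comm] using h))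
    exact (not_summable_iff_tendsto_nat_atTop_of_nonneg (fun j => hγ0 _)).1 this
  have hprod : Tendsto (fun k => (∏ j ∈ Finset.range k, (1 - γ (N + j))) * s N) atTop (𝓝 0) := by
    have hbound : ∀ k, (∏ j ∈ Finset.range k, (1 - γ (N + j))) * s N ≤
        Real.exp (-(∑ j ∈ Finset.range k, γ (N + j))) * s N := by
      intro k
      apply mul_le_mul_of_nonneg_right _ (hs0 N)
      calc ∏ j ∈ Finset.range k, (1 - γ (N + j))
          ≤ ∏ j ∈ Finset.range k, Real.exp (-γ (N + j)) := by
            apply Finset.prod_le_prod (fun j _ => by linarith [hγ1 (N + j)])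
            intro j _
            have := Real.add_one_le_exp (-γ (N + j))
            linarith
        _ = Real.exp (-(∑ j ∈ Finset.range k, γ (N + j))) := by
            rw [← Real.exp_sum]; simp
    have hexp : Tendsto (fun k => Real.exp (-(∑ j ∈ Finset.range k, γ (N + j))) * s N)
        atTop (𝓝 0) := by
      have h1 : Tendsto (fun k => Real.exp (-(∑ j ∈ Finset.range k, γ (N + j)))) atTop (𝓝 0) :=
        Real.tendsto_exp_atBot.comp (tendsto_neg_atTop_atBot.comp hdivN)
      simpa using h1.mul_const (s N)
    have hnn : ∀ k, 0 ≤ (∏ j ∈ Finset.range k, (1 - γ (N + j))) * s N := fun k =>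
      mul_nonneg (Finset.prod_nonneg (fun j _ => by linarith [hγ1 (N + j)])) (hs0 N)
    exact squeeze_zero hnn hbound hexp
  obtain ⟨K, hK⟩ := ((hprod.eventually (eventually_lt_nhds hε4)).exists_forall_of_atTop)
  refine ⟨N + K, fun n hn => ?_⟩
  obtain ⟨k, rfl⟩ := Nat.exists_eq_add_of_le hn
  have hk : K ≤ K + k := Nat.le_add_right _ _
  have := key (K + k)
  have h1 := hK (K + k) hk
  have h2 := hsumtail (K + k)
  have : s (N + (K + k)) ≤ 3 * (ε / 4) := by linarith
  rw [Real.dist_eq, sub_zero, abs_of_nonneg (hs0 _)]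
  calc s (N + K + k) = s (N + (K + k)) := by ring_nf
    _ ≤ 3 * (ε/4) := this
    _ < ε := by linarith

lemma weak_subseq {H : Type*} [NormedAddCommGroup H] [InnerProductSpace ℝ H] [CompleteSpace H]
    (v : ℕ → H) (M : ℝ) (hv : ∀ k, ‖v k‖ ≤ M) :
    ∃ φ : ℕ → ℕ, StrictMono φ ∧ ∃ x : H,
      ∀ z : H, Tendsto (fun j => ⟪v (φ j), z⟫) atTop (𝓝 ⟪x, z⟫) := by
  have hM0 : 0 ≤ M := (norm_nonneg _).trans (hv 0)
  set K : Submodule ℝ H := (Submodule.span ℝ (Set.range v)).topologicalClosure with hK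
  have hKclosed : IsClosed (K : Set H) := Submodule.isClosed_topologicalClosure _
  haveI : CompleteSpace K := hKclosed.completeSpace_coe
  have hvK : ∀ k, v k ∈ K := fun k =>
    Submodule.le_topologicalClosure _ (Submodule.subset_span (Set.mem_range_self k))
  -- separability: dense sequence in K
  have hKsep : IsSeparable (K : Set H) := by
    have h1 : IsSeparable (Submodule.span ℝ (Set.range v) : Set H) :=
      ((Set.countable_range v).isSeparable).span
    exact h1.closure
  obtain ⟨c, hc_count, hc_sub⟩ := hKsep
  have hc'_count : (insert (0 : H) c).Countable := hc_count.insert 0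
  obtain ⟨w, hw⟩ := hc'_count.exists_eq_range ⟨0, Set.mem_insert _ _⟩
  have hdense : ∀ z : H, z ∈ K → ∀ ε : ℝ, 0 < ε → ∃ i, ‖z - w i‖ < ε := by
    intro z hz ε hε
    have h1 : z ∈ closure (Set.range w) := by
      rw [← hw]
      exact closure_mono (Set.subset_insert _ _) (hc_sub hz)
    obtain ⟨i, hi⟩ := Metric.mem_closure_range_iff.1 h1 ε hε
    exact ⟨i, by simpa [dist_eq_norm] using hi⟩
  -- compactness in ℝ^ℕ to get a diagonal subsequence
  set a : ℕ → (ℕ → ℝ) := fun k i => ⟪v k, w i⟫ with ha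
  have hcomp : IsCompact (Set.univ.pi fun i => Set.Icc (-(M * ‖w i‖)) (M * ‖w i‖)) :=
    isCompact_univ_pi fun i => isCompact_Icc
  have hmem : ∀ k, a k ∈ Set.univ.pi fun i => Set.Icc (-(M * ‖w i‖)) (M * ‖w i‖) := by
    intro k
    rw [Set.mem_univ_pi]
    intro i
    have h1 : |⟪v k, w i⟫| ≤ M * ‖w i‖ :=
      (abs_real_inner_le_norm _ _).trans
        (mul_le_mul_of_nonneg_right (hv k) (norm_nonneg _))
    exact abs_le.1 h1
  obtain ⟨g, -, φ, hφ, hg⟩ := hcomp.tendsto_subseq hmem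
  have hcoord : ∀ i, Tendsto (fun j => ⟪v (φ j), w i⟫) atTop (𝓝 (g i)) := by
    intro i
    exact (tendsto_pi_nhds.1 hg) i
  -- projection reduces every z to K
  have hproj : ∀ (k : ℕ) (z : H), ⟪v k, z⟫ = ⟪v k, (K.orthogonalProjectionOnto z : H)⟫ := by
    intro k z
    have hz : z - (K.orthogonalProjectionOnto z : H) ∈ Kᗮ :=
      K.sub_starProjection_mem_orthogonal z
    have h0 : ⟪v k, z - (K.orthogonalProjectionOnto z : H)⟫ = 0 :=
      (Submodule.mem_orthogonal K _).1 hz (v k) (hvK k)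
    have := inner_sub_right (𝕜 := ℝ) (v k) z (K.orthogonalProjectionOnto z : H)
    rw [h0] at this
    linarith
  -- Cauchy for each z
  have hCauchy : ∀ z : H, CauchySeq fun j => ⟪v (φ j), z⟫ := by
    intro z
    rw [Metric.cauchySeq_iff]
    intro ε hε
    set z' : H := (K.orthogonalProjectionOnto z : H) with hz'
    have hz'K : z' ∈ K := SetLike.coe_mem _
    have hε3 : 0 < ε / (3 * (M + 1)) := by positivity
    obtain ⟨i, hi⟩ := hdense z' hz'K _ hε3
    have hcc : CauchySeq fun j => ⟪v (φ j), w i⟫ := (hcoord i).cauchySeq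
    obtain ⟨N, hN⟩ := Metric.cauchySeq_iff.1 hcc (ε / 3) (by linarith)
    refine ⟨N, fun m hm n hn => ?_⟩
    have key : ∀ l, |⟪v (φ l), z⟫ - ⟪v (φ l), w i⟫| ≤ ε / 3 := by
      intro l
      have h1 : ⟪v (φ l), z⟫ - ⟪v (φ l), w i⟫ = ⟪v (φ l), z' - w i⟫ := by
        rw [hproj (φ l) z, inner_sub_right]
      rw [h1]
      have h2 : |⟪v (φ l), z' - w i⟫| ≤ M * ‖z' - w i‖ :=
        (abs_real_inner_le_norm _ _).trans
          (mul_le_mul_of_nonneg_right (hv _) (norm_nonneg _))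
      have h3 : M * ‖z' - w i‖ ≤ M * (ε / (3 * (M + 1))) :=
        mul_le_mul_of_nonneg_left hi.le hM0
      have h4 : M * (ε / (3 * (M + 1))) ≤ ε / 3 := by
        have hM1 : (0:ℝ) < M + 1 := by linarith
        rw [← mul_div_assoc, div_le_div_iff₀ (by positivity) (by norm_num)]
        nlinarith
      linarith
    have hmn := hN m hm n hn
    rw [Real.dist_eq] at hmn ⊢
    have k1 := key m
    have k2 := key n
    have : |⟪v (φ m), z⟫ - ⟪v (φ n), z⟫| ≤ |⟪v (φ m), z⟫ - ⟪v (φ m), w i⟫|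
        + |⟪v (φ m), w i⟫ - ⟪v (φ n), w i⟫| + |⟪v (φ n), w i⟫ - ⟪v (φ n), z⟫| := by
      have := abs_sub_abs_le_abs_sub (⟪v (φ m), z⟫ - ⟪v (φ n), z⟫) 0
      calc |⟪v (φ m), z⟫ - ⟪v (φ n), z⟫|
          = |(⟪v (φ m), z⟫ - ⟪v (φ m), w i⟫) + (⟪v (φ m), w i⟫ - ⟪v (φ n), w i⟫)
            + (⟪v (φ n), w i⟫ - ⟪v (φ n), z⟫)| := by ring_nf
        _ ≤ _ := by
            apply (abs_add_le _ _).trans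
            gcongr
            exact abs_add_le _ _
    have : |⟪v (φ n), w i⟫ - ⟪v (φ n), z⟫| = |⟪v (φ n), z⟫ - ⟪v (φ n), w i⟫| := abs_sub_comm _ _
    linarith [abs_sub_comm (⟪v (φ n), w i⟫) (⟪v (φ n), z⟫), key m, key n,
      (by linarith [hN m hm n hn] : |⟪v (φ m), w i⟫ - ⟪v (φ n), w i⟫| < ε / 3)]
  have hlim : ∀ z : H, ∃ L : ℝ, Tendsto (fun j => ⟪v (φ j), z⟫) atTop (𝓝 L) := fun z =>
    cauchySeq_tendsto_of_complete (hCauchy z)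
  choose F hF using hlim
  have hadd : ∀ z₁ z₂ : H, F (z₁ + z₂) = F z₁ + F z₂ := by
    intro z₁ z₂
    refine tendsto_nhds_unique (hF (z₁ + z₂)) ?_
    have := (hF z₁).add (hF z₂)
    simpa [inner_add_right] using this
  have hsmul : ∀ (r : ℝ) (z : H), F (r • z) = r * F z := by
    intro r z
    refine tendsto_nhds_unique (hF (r • z)) ?_
    have := (hF z).const_mul r
    simpa [real_inner_smul_right] using this
  have hbound : ∀ z : H, ‖F z‖ ≤ M * ‖z‖ := by
    intro z
    rw [Real.norm_eq_abs]
    have h1 : Tendsto (fun j => |⟪v (φ j), z⟫|) atTop (𝓝 |F z|) := (hF z).abs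
    refine le_of_tendsto h1 (Eventually.of_forall fun j => ?_)
    exact (abs_real_inner_le_norm _ _).trans
      (mul_le_mul_of_nonneg_right (hv _) (norm_nonneg _))
  let f : H →ₗ[ℝ] ℝ :=
    { toFun := F
      map_add' := hadd
      map_smul' := hsmul }
  let fC : H →L[ℝ] ℝ := LinearMap.mkContinuous f M hbound
  refine ⟨φ, hφ, (InnerProductSpace.toDual ℝ H).symm fC, fun z => ?_⟩
  have hx : ⟪(InnerProductSpace.toDual ℝ H).symm fC, z⟫ = fC z :=
    InnerProductSpace.toDual_symm_apply
  rw [hx]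
  exact hF z

lemma midpoint_fixed {H : Type*} [NormedAddCommGroup H] [InnerProductSpace ℝ H]
    (T : H → H) (hT : ∀ x y, ‖T x - T y‖ ≤ ‖x - y‖) {a b : H} (ha : T a = a) (hb : T b = b) :
    T ((2:ℝ)⁻¹ • (a + b)) = (2:ℝ)⁻¹ • (a + b) := by
  set m : H := (2:ℝ)⁻¹ • (a + b) with hm
  set p : H := T m with hp
  have h1 : ‖a - p‖ ≤ ‖a - m‖ := by
    calc ‖a - p‖ = ‖T a - T m‖ := by rw [ha]
      _ ≤ ‖a - m‖ := hT a m
  have h2 : ‖b - p‖ ≤ ‖b - m‖ := by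
    calc ‖b - p‖ = ‖T b - T m‖ := by rw [hb]
      _ ≤ ‖b - m‖ := hT b m
  have ham : a - m = (2:ℝ)⁻¹ • (a - b) := by rw [hm]; module
  have hbm : b - m = (2:ℝ)⁻¹ • (b - a) := by rw [hm]; module
  have hnam : ‖a - m‖ = 2⁻¹ * ‖a - b‖ := by
    rw [ham, norm_smul]; norm_num
  have hnbm : ‖b - m‖ = 2⁻¹ * ‖a - b‖ := by
    rw [hbm, norm_smul, norm_sub_rev]; norm_num
  have heq1 : (a - p) + (b - p) = (2:ℝ) • (m - p) := by rw [hm]; module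
  have heq2 : (a - p) - (b - p) = a - b := by abel
  have hpar := parallelogram_law_with_norm ℝ (a - p) (b - p)
  rw [heq1, heq2, norm_smul] at hpar
  have h2n : ‖(2:ℝ)‖ = 2 := by norm_num
  rw [h2n] at hpar
  have hmp : ‖m - p‖ * ‖m - p‖ ≤ 0 := by
    nlinarith [norm_nonneg (m - p), norm_nonneg (a - b), norm_nonneg (a - p), norm_nonneg (b - p)]
  have hz : ‖m - p‖ = 0 := by nlinarith [norm_nonneg (m - p)]
  have hz2 : m - p = 0 := norm_eq_zero.1 hz
  exact (sub_eq_zero.mp hz2).symm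

lemma min_norm_vi {H : Type*} [NormedAddCommGroup H] [InnerProductSpace ℝ H]
    (T : ℕ → H → H) (hT : ∀ n x y, ‖T n x - T n y‖ ≤ ‖x - y‖)
    (xb : H) (hxb : ∀ n, T n xb = xb) (hmin : ∀ y : H, (∀ n, T n y = y) → ‖xb‖ ≤ ‖y‖)
    (x : H) (hx : ∀ n, T n x = x) : 0 ≤ ⟪xb, x - xb⟫ := by
  have hzfix : ∀ k : ℕ, ∀ n, T n (xb + ((2:ℝ)⁻¹)^k • (x - xb)) = xb + ((2:ℝ)⁻¹)^k • (x - xb) := by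
    intro k
    induction k with
    | zero =>
      intro n
      simpa [add_sub_cancel] using hx n
    | succ k ih =>
      intro n
      have hmid := midpoint_fixed (T n) (hT n) (hxb n) (ih n)
      have heq : (2:ℝ)⁻¹ • (xb + (xb + ((2:ℝ)⁻¹)^k • (x - xb)))
          = xb + ((2:ℝ)⁻¹)^(k+1) • (x - xb) := by
        rw [pow_succ]
        module
      rwa [heq] at hmid
  have hineq : ∀ k : ℕ, 0 ≤ 2 * ⟪xb, x - xb⟫ + ((2:ℝ)⁻¹)^k * (‖x - xb‖ * ‖x - xb‖) := by
    intro k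
    set t : ℝ := ((2:ℝ)⁻¹)^k with ht
    have ht0 : 0 < t := by positivity
    have hle : ‖xb‖ ≤ ‖xb + t • (x - xb)‖ := hmin _ (hzfix k)
    have hsq : ‖xb + t • (x - xb)‖ ^ 2
        = ‖xb‖ ^ 2 + 2 * (t * ⟪xb, x - xb⟫) + (t * ‖x - xb‖) ^ 2 := by
      rw [norm_add_sq_real, real_inner_smul_right, norm_smul]
      simp [abs_of_pos ht0]
    have hle2 : ‖xb‖ ^ 2 ≤ ‖xb + t • (x - xb)‖ ^ 2 := by
      have := norm_nonneg xb
      nlinarith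
    rw [hsq] at hle2
    have key : 0 ≤ 2 * ⟪xb, x - xb⟫ + t * (‖x - xb‖ * ‖x - xb‖) := by nlinarith
    exact key
  have htend : Tendsto (fun k : ℕ => 2 * ⟪xb, x - xb⟫ + ((2:ℝ)⁻¹)^k * (‖x - xb‖ * ‖x - xb‖))
      atTop (𝓝 (2 * ⟪xb, x - xb⟫)) := by
    have h1 : Tendsto (fun k : ℕ => ((2:ℝ)⁻¹)^k) atTop (𝓝 0) :=
      tendsto_pow_atTop_nhds_zero_of_lt_one (by norm_num) (by norm_num)
    have := (h1.mul_const (‖x - xb‖ * ‖x - xb‖)).const_add (2 * ⟪xb, x - xb⟫)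
    simpa using this
  have h0 : 0 ≤ 2 * ⟪xb, x - xb⟫ := ge_of_tendsto' htend hineq
  linarith

section Aux
variable {H : Type*} [NormedAddCommGroup H] [InnerProductSpace ℝ H]

lemma km_step (T : H → H) (hT : ∀ x y, ‖T x - T y‖ ≤ ‖x - y‖) (l : ℝ)
    (hl0 : 0 ≤ l) (hl1 : l ≤ 1) (w xb : H) (hfix : T xb = xb) :
    ‖w + l • (T w - w) - xb‖ ≤ ‖w - xb‖ := by
  have hid : w + l • (T w - w) - xb = (1 - l) • (w - xb) + l • (T w - T xb) := by
    rw [hfix]; module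
  rw [hid]
  have h1 : ‖(1 - l) • (w - xb)‖ = (1 - l) * ‖w - xb‖ := by
    rw [norm_smul, Real.norm_eq_abs, abs_of_nonneg (by linarith)]
  have h2 : ‖l • (T w - T xb)‖ = l * ‖T w - T xb‖ := by
    rw [norm_smul, Real.norm_eq_abs, abs_of_nonneg hl0]
  calc ‖(1 - l) • (w - xb) + l • (T w - T xb)‖
      ≤ ‖(1 - l) • (w - xb)‖ + ‖l • (T w - T xb)‖ := norm_add_le _ _
    _ = (1 - l) * ‖w - xb‖ + l * ‖T w - T xb‖ := by rw [h1, h2]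
    _ ≤ ‖w - xb‖ := by nlinarith [hT w xb, norm_nonneg (w - xb)]

lemma beta_step (b : ℝ) (hb0 : 0 ≤ b) (hb1 : b ≤ 1) (un xb : H) :
    ‖b • un - xb‖ ≤ b * ‖un - xb‖ + (1 - b) * ‖xb‖ := by
  have hid : b • un - xb = b • (un - xb) - (1 - b) • xb := by module
  rw [hid]
  calc ‖b • (un - xb) - (1 - b) • xb‖ ≤ ‖b • (un - xb)‖ + ‖(1 - b) • xb‖ := norm_sub_le _ _
    _ = b * ‖un - xb‖ + (1 - b) * ‖xb‖ := by
        rw [norm_smul, norm_smul, Real.norm_eq_abs, Real.norm_eq_abs,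
          abs_of_nonneg hb0, abs_of_nonneg (by linarith)]

end Aux

set_option maxHeartbeats 2000000 in

/-- strong convergence of the Tikhonov-regularized Krasnosel'skiĭ–Mann
algorithm to the minimum-norm common fixed point. -/
theorem stmt_6 {H : Type*} [NormedAddCommGroup H] [InnerProductSpace ℝ H] [CompleteSpace H]
    (T : ℕ → H → H) (hT : ∀ n x y, ‖T n x - T n y‖ ≤ ‖x - y‖)
    (β lam : ℕ → ℝ) (u : ℕ → H)
    (hrec : ∀ n, u (n + 1) = β n • u n + lam n • (T n (β n • u n) - β n • u n))
    (hβ : ∀ n, 0 < β n ∧ β n ≤ 1)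
    (hβlim : Filter.Tendsto β Filter.atTop (nhds 1))
    (hβdiv : ¬ Summable (fun n => 1 - β n))
    (hβsum : Summable (fun n => |β (n + 1) - β n|))
    (hlam : ∀ n, 0 < lam n ∧ lam n ≤ 1)
    (hlaminf : ∃ c : ℝ, 0 < c ∧ ∀ᶠ n in Filter.atTop, c ≤ lam n)
    (hlamsum : Summable (fun n => |lam (n + 1) - lam n|))
    (hTsum : Summable (fun n => ‖T (n + 1) (β n • u n) - T n (β n • u n)‖))
    (hasym : ∀ φ : ℕ → ℕ, StrictMono φ → ∀ x : H,
      (∀ z : H, Filter.Tendsto (fun k => ⟪u (φ k), z⟫) Filter.atTop (nhds ⟪x, z⟫)) →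
      Filter.Tendsto (fun k => u (φ k) - T (φ k) (u (φ k))) Filter.atTop (nhds 0) →
      ∀ n, T n x = x)
    (xb : H) (hxb : ∀ n, T n xb = xb)
    (hmin : ∀ y : H, (∀ n, T n y = y) → ‖xb‖ ≤ ‖y‖) :
    Filter.Tendsto u Filter.atTop (nhds xb) := by
  obtain ⟨cl, hcl0, hcl⟩ := hlaminf
  -- step 1 : boundedness
  have key1 : ∀ n, ‖u (n + 1) - xb‖ ≤ ‖β n • u n - xb‖ := by
    intro n
    rw [hrec n]
    exact km_step (T n) (hT n) (lam n) (hlam n).1.le (hlam n).2 _ _ (hxb n)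
  set M : ℝ := max ‖u 0 - xb‖ ‖xb‖ with hM
  have hMxb : ‖xb‖ ≤ M := le_max_right _ _
  have hM0 : 0 ≤ M := (norm_nonneg _).trans hMxb
  have hbound : ∀ n, ‖u n - xb‖ ≤ M := by
    intro n
    induction n with
    | zero => exact le_max_left _ _
    | succ n ih =>
      have h1 := key1 n
      have h2 := beta_step (β n) (hβ n).1.le (hβ n).2 (u n) xb
      have hb := hβ n
      nlinarith
  have hyb : ∀ n, ‖β n • u n - xb‖ ≤ M := by
    intro n
    have h2 := beta_step (β n) (hβ n).1.le (hβ n).2 (u n) xb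
    have hb := hβ n
    nlinarith [hbound n]
  set M' : ℝ := M + ‖xb‖ with hM'
  have hM'0 : 0 ≤ M' := add_nonneg hM0 (norm_nonneg _)
  have hub : ∀ n, ‖u n‖ ≤ M' := by
    intro n
    calc ‖u n‖ = ‖u n - xb + xb‖ := by rw [sub_add_cancel]
      _ ≤ ‖u n - xb‖ + ‖xb‖ := norm_add_le _ _
      _ ≤ M' := by rw [hM']; linarith [hbound n]
  have hTyb : ∀ n, ‖T n (β n • u n) - β n • u n‖ ≤ 2 * M := by
    intro n
    have h3 : T n (β n • u n) - β n • u n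
        = (T n (β n • u n) - T n xb) + (xb - β n • u n) := by rw [hxb n]; abel
    rw [h3]
    calc ‖(T n (β n • u n) - T n xb) + (xb - β n • u n)‖
        ≤ ‖T n (β n • u n) - T n xb‖ + ‖xb - β n • u n‖ := norm_add_le _ _
      _ ≤ ‖β n • u n - xb‖ + ‖β n • u n - xb‖ := by
          have h4 := hT n (β n • u n) xb
          rw [norm_sub_rev xb]
          linarith
      _ ≤ 2 * M := by linarith [hyb n]
  -- step 2 : ‖u (n+1) - u n‖ → 0
  have hd : Tendsto (fun n => ‖u (n + 1) - u n‖) atTop (𝓝 0) := by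
    apply xu_lemma (fun n => ‖u (n + 1) - u n‖) (fun n => 1 - β (n + 1)) (fun _ => (0:ℝ))
      (fun n => M' * |β (n + 1) - β n| + ‖T (n + 1) (β n • u n) - T n (β n • u n)‖
        + 2 * M * |lam (n + 1) - lam n|)
    · exact fun n => norm_nonneg _
    · intro n; linarith [(hβ (n + 1)).2]
    · intro n; linarith [(hβ (n + 1)).1]
    · intro h
      exact hβdiv ((summable_nat_add_iff 1).1 h)
    · intro ε hε
      exact Eventually.of_forall fun n => hε.le
    · exact ((hβsum.mul_left M').add hTsum).add (hlamsum.mul_left (2 * M))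
    · intro n
      have h1 : 0 ≤ M' * |β (n + 1) - β n| := mul_nonneg hM'0 (abs_nonneg _)
      have h2 : 0 ≤ 2 * M * |lam (n + 1) - lam n| := mul_nonneg (by linarith) (abs_nonneg _)
      have h3 : 0 ≤ ‖T (n + 1) (β n • u n) - T n (β n • u n)‖ := norm_nonneg _
      linarith
    · intro n
      -- the key recursion
      have hid : u (n + 2) - u (n + 1)
          = (1 - lam (n + 1)) • (β (n + 1) • u (n + 1) - β n • u n)
            + lam (n + 1) • (T (n + 1) (β (n + 1) • u (n + 1)) - T n (β n • u n))
            + (lam (n + 1) - lam n) • (T n (β n • u n) - β n • u n) := by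
        rw [show n + 2 = (n + 1) + 1 from rfl, hrec (n + 1), hrec n]
        module
      have hX : ‖β (n + 1) • u (n + 1) - β n • u n‖
          ≤ β (n + 1) * ‖u (n + 1) - u n‖ + |β (n + 1) - β n| * M' := by
        have hid2 : β (n + 1) • u (n + 1) - β n • u n
            = β (n + 1) • (u (n + 1) - u n) + (β (n + 1) - β n) • u n := by module
        rw [hid2]
        calc ‖β (n + 1) • (u (n + 1) - u n) + (β (n + 1) - β n) • u n‖
            ≤ ‖β (n + 1) • (u (n + 1) - u n)‖ + ‖(β (n + 1) - β n) • u n‖ := norm_add_le _ _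
          _ ≤ β (n + 1) * ‖u (n + 1) - u n‖ + |β (n + 1) - β n| * M' := by
              rw [norm_smul, norm_smul, Real.norm_eq_abs, Real.norm_eq_abs,
                abs_of_pos (hβ (n + 1)).1]
              have := mul_le_mul_of_nonneg_left (hub n) (abs_nonneg (β (n + 1) - β n))
              linarith
      have hB : ‖T (n + 1) (β (n + 1) • u (n + 1)) - T n (β n • u n)‖
          ≤ ‖β (n + 1) • u (n + 1) - β n • u n‖
            + ‖T (n + 1) (β n • u n) - T n (β n • u n)‖ := by
        calc ‖T (n + 1) (β (n + 1) • u (n + 1)) - T n (β n • u n)‖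
            = ‖(T (n + 1) (β (n + 1) • u (n + 1)) - T (n + 1) (β n • u n))
              + (T (n + 1) (β n • u n) - T n (β n • u n))‖ := by abel_nf
          _ ≤ ‖T (n + 1) (β (n + 1) • u (n + 1)) - T (n + 1) (β n • u n)‖
              + ‖T (n + 1) (β n • u n) - T n (β n • u n)‖ := norm_add_le _ _
          _ ≤ _ := by
              have := hT (n + 1) (β (n + 1) • u (n + 1)) (β n • u n)
              linarith
      have hl1 := hlam (n + 1)
      have hnorm3 : ‖u (n + 2) - u (n + 1)‖
          ≤ (1 - lam (n + 1)) * ‖β (n + 1) • u (n + 1) - β n • u n‖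
            + lam (n + 1) * ‖T (n + 1) (β (n + 1) • u (n + 1)) - T n (β n • u n)‖
            + |lam (n + 1) - lam n| * ‖T n (β n • u n) - β n • u n‖ := by
        rw [hid]
        calc ‖(1 - lam (n + 1)) • (β (n + 1) • u (n + 1) - β n • u n)
              + lam (n + 1) • (T (n + 1) (β (n + 1) • u (n + 1)) - T n (β n • u n))
              + (lam (n + 1) - lam n) • (T n (β n • u n) - β n • u n)‖
            ≤ ‖(1 - lam (n + 1)) • (β (n + 1) • u (n + 1) - β n • u n)‖
              + ‖lam (n + 1) • (T (n + 1) (β (n + 1) • u (n + 1)) - T n (β n • u n))‖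
              + ‖(lam (n + 1) - lam n) • (T n (β n • u n) - β n • u n)‖ := norm_add₃_le
          _ ≤ _ := by
              rw [norm_smul, norm_smul, norm_smul, Real.norm_eq_abs, Real.norm_eq_abs,
                Real.norm_eq_abs, abs_of_nonneg (by linarith [hl1.2] : (0:ℝ) ≤ 1 - lam (n + 1)),
                abs_of_pos hl1.1]
      have hC : |lam (n + 1) - lam n| * ‖T n (β n • u n) - β n • u n‖
          ≤ |lam (n + 1) - lam n| * (2 * M) :=
        mul_le_mul_of_nonneg_left (hTyb n) (abs_nonneg _)
      have hE0 : 0 ≤ ‖T (n + 1) (β n • u n) - T n (β n • u n)‖ := norm_nonneg _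
      have hX0 : 0 ≤ ‖β (n + 1) • u (n + 1) - β n • u n‖ := norm_nonneg _
      have hβ1 := hβ (n + 1)
      calc ‖u (n + 1 + 1) - u (n + 1)‖ = ‖u (n + 2) - u (n + 1)‖ := by norm_num
        _ ≤ (1 - lam (n + 1)) * ‖β (n + 1) • u (n + 1) - β n • u n‖
            + lam (n + 1) * ‖T (n + 1) (β (n + 1) • u (n + 1)) - T n (β n • u n)‖
            + |lam (n + 1) - lam n| * ‖T n (β n • u n) - β n • u n‖ := hnorm3
        _ ≤ ‖β (n + 1) • u (n + 1) - β n • u n‖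
            + lam (n + 1) * ‖T (n + 1) (β n • u n) - T n (β n • u n)‖
            + |lam (n + 1) - lam n| * (2 * M) := by nlinarith [hl1.1, hl1.2, hB]
        _ ≤ β (n + 1) * ‖u (n + 1) - u n‖ + |β (n + 1) - β n| * M'
            + ‖T (n + 1) (β n • u n) - T n (β n • u n)‖
            + |lam (n + 1) - lam n| * (2 * M) := by nlinarith [hl1.1, hl1.2]
        _ ≤ (1 - (1 - β (n + 1))) * ‖u (n + 1) - u n‖ + (1 - β (n + 1)) * 0
            + (M' * |β (n + 1) - β n| + ‖T (n + 1) (β n • u n) - T n (β n • u n)‖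
              + 2 * M * |lam (n + 1) - lam n|) := by ring_nf; linarith
  -- step 3 : residuals tend to zero
  have hβ0lim : Tendsto (fun n => 1 - β n) atTop (𝓝 0) := by
    have := (tendsto_const_nhds (x := (1:ℝ))).sub hβlim
    simpa using this
  have huw : ∀ n, ‖u n - β n • u n‖ ≤ (1 - β n) * M' := by
    intro n
    have hid : u n - β n • u n = (1 - β n) • u n := by module
    rw [hid, norm_smul, Real.norm_eq_abs, abs_of_nonneg (by linarith [(hβ n).2])]
    exact mul_le_mul_of_nonneg_left (hub n) (by linarith [(hβ n).2])
  have hq : Tendsto (fun n => ‖T n (β n • u n) - β n • u n‖) atTop (𝓝 0) := by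
    have hbd : ∀ᶠ n in atTop, ‖T n (β n • u n) - β n • u n‖
        ≤ (‖u (n + 1) - u n‖ + (1 - β n) * M') / cl := by
      filter_upwards [hcl] with n hcln
      have hid : u (n + 1) - β n • u n = lam n • (T n (β n • u n) - β n • u n) := by
        rw [hrec n]; abel
      have h1 : lam n * ‖T n (β n • u n) - β n • u n‖ = ‖u (n + 1) - β n • u n‖ := by
        rw [hid, norm_smul, Real.norm_eq_abs, abs_of_pos (hlam n).1]
      have h2 : ‖u (n + 1) - β n • u n‖ ≤ ‖u (n + 1) - u n‖ + ‖u n - β n • u n‖ :=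
        norm_sub_le_norm_sub_add_norm_sub _ _ _
      have h3 := huw n
      have h4 : lam n * ‖T n (β n • u n) - β n • u n‖ ≤ ‖u (n + 1) - u n‖ + (1 - β n) * M' := by
        linarith
      have h5 : cl * ‖T n (β n • u n) - β n • u n‖ ≤ ‖u (n + 1) - u n‖ + (1 - β n) * M' := by
        nlinarith [norm_nonneg (T n (β n • u n) - β n • u n)]
      rw [le_div_iff₀ hcl0]
      nlinarith [h5]
    have hg : Tendsto (fun n => (‖u (n + 1) - u n‖ + (1 - β n) * M') / cl)
        atTop (𝓝 0) := by
      have h1 : Tendsto (fun n => ‖u (n + 1) - u n‖ + (1 - β n) * M') atTop (𝓝 0) := by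
        have := hd.add (hβ0lim.mul_const M')
        simpa using this
      have := h1.div_const cl
      simpa using this
    exact squeeze_zero' (Eventually.of_forall fun n => norm_nonneg _) hbd hg
  have hres : Tendsto (fun n => ‖u n - T n (u n)‖) atTop (𝓝 0) := by
    have hbd : ∀ n, ‖u n - T n (u n)‖
        ≤ 2 * ((1 - β n) * M') + ‖T n (β n • u n) - β n • u n‖ := by
      intro n
      have h1 : u n - T n (u n) = (u n - β n • u n) + (β n • u n - T n (β n • u n))
          + (T n (β n • u n) - T n (u n)) := by abel
      rw [h1]
      have h2 := norm_add₃_le (a := u n - β n • u n) (b := β n • u n - T n (β n • u n))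
        (c := T n (β n • u n) - T n (u n))
      have h3 := hT n (β n • u n) (u n)
      have h4 : ‖β n • u n - u n‖ = ‖u n - β n • u n‖ := norm_sub_rev _ _
      have h5 : ‖β n • u n - T n (β n • u n)‖ = ‖T n (β n • u n) - β n • u n‖ :=
        norm_sub_rev _ _
      have h6 := huw n
      linarith
    have hg : Tendsto (fun n => 2 * ((1 - β n) * M') + ‖T n (β n • u n) - β n • u n‖)
        atTop (𝓝 0) := by
      have := ((hβ0lim.mul_const M').const_mul 2).add hq
      simpa using this
    exact squeeze_zero (fun n => norm_nonneg _) hbd hg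
  -- step 4 : limsup condition
  have hδε : ∀ ε : ℝ, 0 < ε → ∀ᶠ n in atTop, 2 * ⟪-xb, β n • u n - xb⟫ ≤ ε := by
    by_contra hcon
    push_neg at hcon
    obtain ⟨ε, hε, hfreq⟩ := hcon
    have hfreq : ∃ᶠ n in atTop, ¬ (2 * ⟪-xb, β n • u n - xb⟫ ≤ ε) := hfreq.mono fun n hn => not_le.2 hn
    have hfreq' : ∃ᶠ n in atTop, ε < 2 * ⟪-xb, β n • u n - xb⟫ := by
      apply hfreq.mono
      intro n hn
      exact not_le.mp hn
    obtain ⟨φ₀, hφ₀, hgt⟩ := extraction_of_frequently_atTop hfreq'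
    obtain ⟨ψ, hψ, x, hxweak⟩ := weak_subseq (fun k => u (φ₀ k)) M' (fun k => hub _)
    have hχ : StrictMono (fun k => φ₀ (ψ k)) := hφ₀.comp hψ
    have hweak' : ∀ z : H, Tendsto (fun k => ⟪u (φ₀ (ψ k)), z⟫) atTop (𝓝 ⟪x, z⟫) :=
      fun z => hxweak z
    have hto0 : Tendsto (fun k => u (φ₀ (ψ k)) - T (φ₀ (ψ k)) (u (φ₀ (ψ k)))) atTop (𝓝 0) := by
      rw [tendsto_zero_iff_norm_tendsto_zero]
      exact hres.comp hχ.tendsto_atTop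
    have hfix : ∀ n, T n x = x := hasym _ hχ x hweak' hto0
    have hvi : 0 ≤ ⟪xb, x - xb⟫ := min_norm_vi T hT xb hxb hmin x hfix
    have hβχ : Tendsto (fun k => β (φ₀ (ψ k))) atTop (𝓝 1) := hβlim.comp hχ.tendsto_atTop
    have hinner : Tendsto (fun k => ⟪-xb, u (φ₀ (ψ k))⟫) atTop (𝓝 ⟪-xb, x⟫) := by
      have := hweak' (-xb)
      have heq : ∀ y : H, ⟪y, -xb⟫ = ⟪-xb, y⟫ := fun y => real_inner_comm _ _
      simp only [heq] at this
      exact this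
    have hlim : Tendsto (fun k => 2 * ⟪-xb, β (φ₀ (ψ k)) • u (φ₀ (ψ k)) - xb⟫) atTop
        (𝓝 (2 * ⟪-xb, x - xb⟫)) := by
      have h1 : ∀ k, 2 * ⟪-xb, β (φ₀ (ψ k)) • u (φ₀ (ψ k)) - xb⟫
          = 2 * (β (φ₀ (ψ k)) * ⟪-xb, u (φ₀ (ψ k))⟫ - ⟪-xb, xb⟫) := by
        intro k
        rw [inner_sub_right, real_inner_smul_right]
      have h2 : Tendsto (fun k => 2 * (β (φ₀ (ψ k)) * ⟪-xb, u (φ₀ (ψ k))⟫ - ⟪-xb, xb⟫))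
          atTop (𝓝 (2 * (1 * ⟪-xb, x⟫ - ⟪-xb, xb⟫))) :=
        (((hβχ.mul hinner).sub tendsto_const_nhds).const_mul 2)
      have h3 : 2 * (1 * ⟪-xb, x⟫ - ⟪-xb, xb⟫) = 2 * ⟪-xb, x - xb⟫ := by
        rw [inner_sub_right]; ring
      rw [← h3]
      simpa only [h1] using h2
    have hle : ε ≤ 2 * ⟪-xb, x - xb⟫ := ge_of_tendsto' hlim fun k => (hgt (ψ k)).le
    have hneg : ⟪-xb, x - xb⟫ = -⟪xb, x - xb⟫ := by rw [inner_neg_left]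
    rw [hneg] at hle
    linarith
  -- step 5 : conclusion via xu_lemma
  have hs5 : Tendsto (fun n => ‖u n - xb‖ ^ 2) atTop (𝓝 0) := by
    apply xu_lemma (fun n => ‖u n - xb‖ ^ 2) (fun n => 1 - β n)
      (fun n => 2 * ⟪-xb, β n • u n - xb⟫) (fun _ => (0:ℝ))
    · exact fun n => sq_nonneg _
    · intro n; linarith [(hβ n).2]
    · intro n; linarith [(hβ n).1]
    · exact hβdiv
    · exact hδε
    · exact summable_zero
    · exact fun n => le_refl 0
    · intro n
      have h1 : ‖u (n + 1) - xb‖ ^ 2 ≤ ‖β n • u n - xb‖ ^ 2 := by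
        have := key1 n
        nlinarith [norm_nonneg (u (n + 1) - xb)]
      have hid : β n • u n - xb = β n • (u n - xb) + (1 - β n) • (-xb) := by module
      have h2 : ‖β n • u n - xb‖ ^ 2
          ≤ (β n) ^ 2 * ‖u n - xb‖ ^ 2 + 2 * ((1 - β n) * ⟪-xb, β n • u n - xb⟫) := by
        have hsq := norm_add_sq_real (β n • (u n - xb)) ((1 - β n) • (-xb))
        have hb1 : ⟪(1 - β n) • (-xb), β n • (u n - xb) + (1 - β n) • (-xb)⟫
            = (1 - β n) * ⟪-xb, β n • u n - xb⟫ := by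
          rw [real_inner_smul_left, ← hid]
        have hb2 : ⟪β n • (u n - xb), (1 - β n) • (-xb)⟫
            = ⟪(1 - β n) • (-xb), β n • (u n - xb)⟫ := real_inner_comm _ _
        have hb3 : ⟪(1 - β n) • (-xb), β n • (u n - xb)⟫
            = ⟪(1 - β n) • (-xb), β n • (u n - xb) + (1 - β n) • (-xb)⟫
              - ‖(1 - β n) • (-xb)‖ ^ 2 := by
          rw [inner_add_right, real_inner_self_eq_norm_sq]
          ring
        have hna : ‖β n • (u n - xb)‖ ^ 2 = (β n) ^ 2 * ‖u n - xb‖ ^ 2 := by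
          rw [norm_smul, Real.norm_eq_abs, abs_of_pos (hβ n).1, mul_pow]
        have hnb : 0 ≤ ‖(1 - β n) • (-xb)‖ ^ 2 := sq_nonneg _
        rw [← hid] at hsq
        rw [hb2, hb3, hb1] at hsq
        rw [hna] at hsq
        linarith
      have h3 : (β n) ^ 2 * ‖u n - xb‖ ^ 2 ≤ β n * ‖u n - xb‖ ^ 2 := by
        have hb := hβ n
        have hsq : β n ^ 2 ≤ β n := by nlinarith
        exact mul_le_mul_of_nonneg_right hsq (sq_nonneg _)
      calc ‖u (n + 1) - xb‖ ^ 2 ≤ ‖β n • u n - xb‖ ^ 2 := h1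
        _ ≤ (β n) ^ 2 * ‖u n - xb‖ ^ 2 + 2 * ((1 - β n) * ⟪-xb, β n • u n - xb⟫) := h2
        _ ≤ (1 - (1 - β n)) * ‖u n - xb‖ ^ 2
            + (1 - β n) * (2 * ⟪-xb, β n • u n - xb⟫) + 0 := by ring_nf; linarith
  rw [tendsto_iff_norm_sub_tendsto_zero]
  have h2 : Tendsto (fun n => Real.sqrt (‖u n - xb‖ ^ 2)) atTop (𝓝 (Real.sqrt 0)) :=
    (Real.continuous_sqrt.tendsto 0).comp hs5
  have h3 : (fun n => Real.sqrt (‖u n - xb‖ ^ 2)) = fun n => ‖u n - xb‖ :=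
    funext fun n => Real.sqrt_sq (norm_nonneg _)
  rw [h3, Real.sqrt_zero] at h2
  exact h2
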